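/- Let (X,T) and (Y,S) be minimal systems, λ an S-invariant Borel probability measure on Y, N a closed T×S-invariant subset of X×Y, and define D_N(x,x') = λ(N[x] Δ N[x']) where N[x] = {y : (x,y) ∈ N}. Then D_N is continuous on X×X and T×T-invariant, i.e. D_N(Tx, Tx') = D_N(x,x'). -/

import Mathlib

open Filter Topology Set

/-- A map between topological spaces is *semiopen* if the image of every
nonempty open set has nonempty interior. -/
def SemiOpen {X Y : Type*} [TopologicalSpace X] [TopologicalSpace Y] (f : X → Y) : Prop :=
  ∀ U : Set X, IsOpen U → U.Nonempty → (interior (f '' U)).Nonempty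

/-- The `n`-th iterate (`n : ℤ`) of a homeomorphism. -/
def zIter {X : Type*} [TopologicalSpace X] (T : X ≃ₜ X) (n : ℤ) : X → X :=
  fun x => (T.toEquiv ^ n) x

/-- The two-sided orbit of a point under a homeomorphism. -/
def zOrbit {X : Type*} [TopologicalSpace X] (T : X ≃ₜ X) (x : X) : Set X :=
  Set.range fun n : ℤ => zIter T n x

/-- A system is minimal if every orbit is dense. -/
def IsMinimalSystem {X : Type*} [TopologicalSpace X] (T : X ≃ₜ X) : Prop :=
  ∀ x : X, Dense (zOrbit T x)

/-- A minimal subset: nonempty, closed, invariant, with no proper nonempty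
closed invariant subset. -/
def IsMinimalSubset {X : Type*} [TopologicalSpace X] (T : X ≃ₜ X) (M : Set X) : Prop :=
  M.Nonempty ∧ IsClosed M ∧ T '' M = M ∧
    ∀ M' ⊆ M, M'.Nonempty → IsClosed M' → T '' M' = M' → M' = M

/-- A factor map between systems. -/
def IsFactorMap {X Y : Type*} [TopologicalSpace X] [TopologicalSpace Y]
    (T : X ≃ₜ X) (S : Y ≃ₜ Y) (f : X → Y) : Prop :=
  Continuous f ∧ Function.Surjective f ∧ ∀ x, f (T x) = S (f x)

/-- The regionally proximal relation. -/
def RP {X : Type*} [MetricSpace X] (T : X ≃ₜ X) : Set (X × X) :=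
  {p | ∃ (u v : ℕ → X) (n : ℕ → ℤ),
    Tendsto u atTop (𝓝 p.1) ∧ Tendsto v atTop (𝓝 p.2) ∧
    Tendsto (fun i => dist (zIter T (n i) (u i)) (zIter T (n i) (v i))) atTop (𝓝 0)}

/-- A joining of two systems: a closed invariant subset of the product with
full projections onto both coordinates. -/
def IsJoining {X Y : Type*} [TopologicalSpace X] [TopologicalSpace Y]
    (T : X ≃ₜ X) (S : Y ≃ₜ Y) (J : Set (X × Y)) : Prop :=
  IsClosed J ∧ (T.prodCongr S) '' J = J ∧
    Prod.fst '' J = Set.univ ∧ Prod.snd '' J = Set.univ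

/-- `J` projects onto `X_eq × Y_eq`: phrased via the regionally proximal
relation, every product of RP-cells meets `J`. -/
def FullEqProjection {X Y : Type*} [MetricSpace X] [MetricSpace Y]
    (T : X ≃ₜ X) (S : Y ≃ₜ Y) (J : Set (X × Y)) : Prop :=
  ∀ x : X, ∀ y : Y, ∃ p ∈ J, (x, p.1) ∈ RP T ∧ (y, p.2) ∈ RP S

/-- Two minimal systems are quasi-disjoint if the full product is the only
joining projecting onto the product of the maximal equicontinuous factors. -/
def QuasiDisjoint {X Y : Type*} [MetricSpace X] [MetricSpace Y]
    (T : X ≃ₜ X) (S : Y ≃ₜ Y) : Prop :=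
  ∀ J : Set (X × Y), IsJoining T S J → FullEqProjection T S J → J = Set.univ

/-- Two systems are disjoint if the full product is the only joining. -/
def DisjointSystems {X Y : Type*} [TopologicalSpace X] [TopologicalSpace Y]
    (T : X ≃ₜ X) (S : Y ≃ₜ Y) : Prop :=
  ∀ J : Set (X × Y), IsJoining T S J → J = Set.univ

/-- A system is equicontinuous (with respect to all integer iterates). -/
def EquicontinuousSystem {X : Type*} [MetricSpace X] (T : X ≃ₜ X) : Prop :=
  ∀ ε > (0 : ℝ), ∃ δ > (0 : ℝ), ∀ x₁ x₂ : X, dist x₁ x₂ < δ →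
    ∀ n : ℤ, dist (zIter T n x₁) (zIter T n x₂) < ε

/-- A pair of points is proximal. -/
def ProximalPair {X : Type*} [MetricSpace X] (T : X ≃ₜ X) (x₁ x₂ : X) : Prop :=
  ∀ ε > (0 : ℝ), ∃ n : ℤ, dist (zIter T n x₁) (zIter T n x₂) < ε

/-- D_N(x,x') = λ(N[x] Δ N[x']) is continuous and
T×T-invariant. -/
theorem stmt15 {X Y : Type*} [MetricSpace X] [CompactSpace X]
    [MetricSpace Y] [CompactSpace Y] [MeasurableSpace Y] [BorelSpace Y]
    (T : X ≃ₜ X) (S : Y ≃ₜ Y)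
    (hX : IsMinimalSystem T) (hY : IsMinimalSystem S)
    (lam : MeasureTheory.Measure Y) [MeasureTheory.IsProbabilityMeasure lam]
    (hinv : ∀ A : Set Y, MeasurableSet A → lam (S ⁻¹' A) = lam A)
    (N : Set (X × Y)) (hNclosed : IsClosed N) (hNinv : (T.prodCongr S) '' N = N) :
    Continuous (fun p : X × X =>
      (lam (symmDiff {y : Y | (p.1, y) ∈ N} {y : Y | (p.2, y) ∈ N})).toReal) ∧
    ∀ x x' : X,
      lam (symmDiff {y : Y | (T x, y) ∈ N} {y : Y | (T x', y) ∈ N}) =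
        lam (symmDiff {y : Y | (x, y) ∈ N} {y : Y | (x', y) ∈ N}) := by
  classical
  set F : X → Set Y := fun x => {y : Y | (x, y) ∈ N} with hFdef
  have hFclosed : ∀ x, IsClosed (F x) := fun x =>
    hNclosed.preimage (Continuous.prodMk_right x)
  have hFmeas : ∀ x, MeasurableSet (F x) := fun x => (hFclosed x).measurableSet
  -- sections transform by S
  have hsec : ∀ x, F (T x) = S '' F x := by
    intro x
    ext y
    constructor
    · intro hy
      have hy' : (T x, y) ∈ N := hy
      rw [← hNinv] at hy' 
      obtain ⟨⟨a, b⟩, hab, heq⟩ := hy' 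
      have h1 : T a = T x := congrArg Prod.fst heq
      have h2 : S b = y := congrArg Prod.snd heq
      have ha : a = x := T.injective h1
      exact ⟨b, by simpa [hFdef, ha] using hab, h2⟩
    · rintro ⟨b, hb, rfl⟩
      have hb' : ((x, b) : X × Y) ∈ N := hb
      show (T x, S b) ∈ N
      rw [← hNinv]
      exact ⟨(x, b), hb', rfl⟩
  -- S-images preserve the measure
  have hS : ∀ A : Set Y, MeasurableSet A → lam (S '' A) = lam A := by
    intro A hA
    have himg : S '' A = S.symm ⁻¹' A := by
      ext y
      constructor
      · rintro ⟨b, hb, rfl⟩; simpa using hb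
      · intro h; exact ⟨S.symm y, h, by simp⟩
    have hmeasA : MeasurableSet (S.symm ⁻¹' A) := hA.preimage S.symm.continuous.measurable
    have := hinv (S.symm ⁻¹' A) hmeasA
    have hpre : S ⁻¹' (S.symm ⁻¹' A) = A := by ext y; simp
    rw [hpre] at this
    rw [himg, ← this]
  set g : X → ENNReal := fun x => lam (F x) with hgdef
  have hgfin : ∀ x, g x ≠ ⊤ := fun x => MeasureTheory.measure_ne_top lam (F x)
  have hgT : ∀ x, g (T x) = g x := by
    intro x
    simp only [hgdef]
    rw [hsec x, hS _ (hFmeas x)]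
  have hgTsymm : ∀ x, g (T.symm x) = g x := by
    intro x
    have := hgT (T.symm x)
    simpa using this.symm
  -- invariance under all integer iterates
  have hgz : ∀ n : ℤ, ∀ x, g (zIter T n x) = g x := by
    intro n
    induction n using Int.induction_on with
    | zero => intro x; simp [zIter]
    | succ n ih =>
      intro x
      have hz : zIter T ((n : ℤ) + 1) x = zIter T (n : ℤ) (T x) := by
        simp only [zIter, zpow_add_one, Equiv.Perm.mul_apply]
        rfl
      rw [hz, ih (T x), hgT x]
    | pred n ih =>
      intro x
      have hz : zIter T (-(n : ℤ) - 1) x = zIter T (-(n : ℤ)) (T.symm x) := by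
        simp only [zIter, zpow_sub_one, Equiv.Perm.mul_apply]
        rfl
      rw [hz, ih (T.symm x), hgTsymm x]
  -- upper semicontinuity of sections
  have husc : ∀ x : X, ∀ U : Set Y, IsOpen U → F x ⊆ U →
      ∃ V ∈ 𝓝 x, ∀ x' ∈ V, F x' ⊆ U := by
    intro x U hU hsub
    set K : Set X := Prod.fst '' (N ∩ (Set.univ ×ˢ Uᶜ)) with hKdef
    have hKcl : IsClosed K := by
      have hNc : IsCompact N := hNclosed.isCompact
      have : IsCompact (N ∩ (Set.univ ×ˢ Uᶜ)) :=
        hNc.inter_right (isClosed_univ.prod hU.isClosed_compl)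
      exact (this.image continuous_fst).isClosed
    have hxK : x ∉ K := by
      rintro ⟨⟨a, b⟩, ⟨hab, hmem⟩, rfl⟩
      exact hmem.2 (hsub hab)
    refine ⟨Kᶜ, hKcl.isOpen_compl.mem_nhds hxK, fun x' hx' y hy => ?_⟩
    by_contra hyU
    exact hx' ⟨(x', y), ⟨hy, ⟨Set.mem_univ _, hyU⟩⟩, rfl⟩
  -- g is constant (uses minimality of T)
  have hgconst : ∀ x x' : X, g x = g x' := by
    suffices h : ∀ x x' : X, g x ≤ g x' from
      fun x x' => le_antisymm (h x x') (h x' x)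
    intro x x'
    refine ENNReal.le_of_forall_pos_le_add fun ε hε _ => ?_
    obtain ⟨U, hUsub, hUopen, hUle⟩ :=
      (F x').exists_isOpen_le_add lam (ε := (ε : ENNReal)) (by exact_mod_cast hε.ne')
    obtain ⟨V, hV, hVsub⟩ := husc x' U hUopen hUsub
    obtain ⟨O, hOsub, hOopen, hxO⟩ := mem_nhds_iff.mp hV
    obtain ⟨z, hz, hzO⟩ := (hX x).exists_mem_open hOopen ⟨x', hxO⟩
    obtain ⟨n, rfl⟩ := hz
    calc g x = g (zIter T n x) := (hgz n x).symm
      _ ≤ lam U := MeasureTheory.measure_mono (hVsub _ (hOsub hzO))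
      _ ≤ g x' + ε := hUle
  -- key: continuity of x ↦ F x in the measure pseudometric
  have hkey : ∀ (x : X) (ε : ENNReal), ε ≠ 0 → ∃ V ∈ 𝓝 x, ∀ x' ∈ V,
      lam (symmDiff (F x') (F x)) ≤ ε := by
    intro x ε hε
    have hε2 : (ε / 2 : ENNReal) ≠ 0 :=
      (ENNReal.div_pos hε (by norm_num)).ne'
    obtain ⟨U, hUsub, hUopen, hUle⟩ := (F x).exists_isOpen_le_add lam hε2
    obtain ⟨V, hV, hVsub⟩ := husc x U hUopen hUsub
    refine ⟨V, hV, fun x' hx' => ?_⟩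
    have h1 : lam (F x' \ F x) ≤ ε / 2 := by
      have hsublam : lam (F x' \ F x) ≤ lam (U \ F x) :=
        MeasureTheory.measure_mono (Set.diff_subset_diff_left (hVsub x' hx'))
      have hdiff : lam (U \ F x) = lam U - lam (F x) :=
        MeasureTheory.measure_diff hUsub (hFmeas x).nullMeasurableSet
          (MeasureTheory.measure_ne_top lam _)
      refine hsublam.trans ?_
      rw [hdiff]
      exact tsub_le_iff_right.mpr (by rw [add_comm]; exact hUle)
    have h2 : lam (F x \ F x') ≤ ε / 2 := by
      have e1 : lam (F x' \ F x) + lam (F x' ∩ F x) = lam (F x') :=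
        MeasureTheory.measure_diff_add_inter (F x') (hFmeas x)
      have e2 : lam (F x \ F x') + lam (F x ∩ F x') = lam (F x) :=
        MeasureTheory.measure_diff_add_inter (F x) (hFmeas x')
      have hgg : lam (F x') = lam (F x) := hgconst x' x
      have hcomm : F x' ∩ F x = F x ∩ F x' := Set.inter_comm _ _
      have e3 : lam (F x \ F x') + lam (F x ∩ F x')
          = lam (F x' \ F x) + lam (F x ∩ F x') := by
        rw [e2, ← hgg, ← e1, hcomm]
      have hfin : lam (F x ∩ F x') ≠ ⊤ := MeasureTheory.measure_ne_top lam _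
      have := WithTop.add_right_cancel hfin e3
      rw [this]; exact h1
    calc lam (symmDiff (F x') (F x)) ≤ lam (F x' \ F x) + lam (F x \ F x') := by
          rw [symmDiff_def]
          exact (MeasureTheory.measure_union_le _ _).trans (le_refl _)
      _ ≤ ε / 2 + ε / 2 := add_le_add h1 h2
      _ = ε := ENNReal.add_halves ε
  constructor
  · rw [continuous_iff_continuousAt]
    intro p
    rw [ContinuousAt, Metric.tendsto_nhds]
    intro ε hε
    have hε3 : ENNReal.ofReal (ε / 3) ≠ 0 := by
      simp only [ne_eq, ENNReal.ofReal_eq_zero, not_le]; linarith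
    obtain ⟨V₁, hV₁, hb₁⟩ := hkey p.1 _ hε3
    obtain ⟨V₂, hV₂, hb₂⟩ := hkey p.2 _ hε3
    filter_upwards [prod_mem_nhds hV₁ hV₂] with q hq
    have hq₁ : lam (symmDiff (F q.1) (F p.1)) ≤ ENNReal.ofReal (ε / 3) := hb₁ q.1 hq.1
    have hq₂ : lam (symmDiff (F q.2) (F p.2)) ≤ ENNReal.ofReal (ε / 3) := hb₂ q.2 hq.2
    set c₁ := lam (symmDiff (F q.1) (F p.1)) with hc₁
    set c₂ := lam (symmDiff (F q.2) (F p.2)) with hc₂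
    set A := lam (symmDiff (F q.1) (F q.2)) with hA
    set B := lam (symmDiff (F p.1) (F p.2)) with hB
    have hAfin : A ≠ ⊤ := MeasureTheory.measure_ne_top lam _
    have hBfin : B ≠ ⊤ := MeasureTheory.measure_ne_top lam _
    have hc₁fin : c₁ ≠ ⊤ := MeasureTheory.measure_ne_top lam _
    have hc₂fin : c₂ ≠ ⊤ := MeasureTheory.measure_ne_top lam _
    have tri1 : A ≤ c₁ + B + c₂ := by
      calc A ≤ lam (symmDiff (F q.1) (F p.2)) + lam (symmDiff (F p.2) (F q.2)) :=
            MeasureTheory.measure_symmDiff_le _ _ _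
        _ ≤ (lam (symmDiff (F q.1) (F p.1)) + lam (symmDiff (F p.1) (F p.2)))
              + lam (symmDiff (F p.2) (F q.2)) :=
            add_le_add_left (MeasureTheory.measure_symmDiff_le _ _ _) _
        _ = c₁ + B + c₂ := by rw [hc₁, hB, hc₂, symmDiff_comm (F p.2) (F q.2)]
    have tri2 : B ≤ c₁ + A + c₂ := by
      calc B ≤ lam (symmDiff (F p.1) (F q.2)) + lam (symmDiff (F q.2) (F p.2)) :=
            MeasureTheory.measure_symmDiff_le _ _ _
        _ ≤ (lam (symmDiff (F p.1) (F q.1)) + lam (symmDiff (F q.1) (F q.2)))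
              + lam (symmDiff (F q.2) (F p.2)) :=
            add_le_add_left (MeasureTheory.measure_symmDiff_le _ _ _) _
        _ = c₁ + A + c₂ := by rw [hc₁, hA, hc₂, symmDiff_comm (F p.1) (F q.1)]
    have hc₁r : c₁.toReal ≤ ε / 3 := by
      rw [← ENNReal.toReal_ofReal (by linarith : (0:ℝ) ≤ ε / 3)]
      exact ENNReal.toReal_mono ENNReal.ofReal_ne_top hq₁
    have hc₂r : c₂.toReal ≤ ε / 3 := by
      rw [← ENNReal.toReal_ofReal (by linarith : (0:ℝ) ≤ ε / 3)]
      exact ENNReal.toReal_mono ENNReal.ofReal_ne_top hq₂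
    have hAr : A.toReal ≤ c₁.toReal + B.toReal + c₂.toReal := by
      have := ENNReal.toReal_mono (by finiteness) tri1
      rwa [ENNReal.toReal_add (by finiteness) hc₂fin,
        ENNReal.toReal_add hc₁fin hBfin] at this
    have hBr : B.toReal ≤ c₁.toReal + A.toReal + c₂.toReal := by
      have := ENNReal.toReal_mono (by finiteness) tri2
      rwa [ENNReal.toReal_add (by finiteness) hc₂fin,
        ENNReal.toReal_add hc₁fin hAfin] at this
    have : |A.toReal - B.toReal| < ε := by
      rw [abs_sub_lt_iff]
      constructor <;> linarith
    simpa [Real.dist_eq, hA, hB, hFdef] using this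
  · intro x x'
    have h1 : symmDiff (F (T x)) (F (T x')) = S '' symmDiff (F x) (F x') := by
      rw [hsec x, hsec x']
      exact (Set.image_symmDiff S.injective (F x) (F x')).symm
    have h2 : MeasurableSet (symmDiff (F x) (F x')) :=
      (hFmeas x).symmDiff (hFmeas x')
    calc lam (symmDiff (F (T x)) (F (T x'))) = lam (S '' symmDiff (F x) (F x')) := by rw [h1]
      _ = lam (symmDiff (F x) (F x')) := hS _ h2
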